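/- Let E > 0. For all m, n ∈ ℕ₀ and both signs, the functions F^±_{m,n} are simultaneous generalized eigenfunctions of D² and D̃² with purely imaginary eigenvalues: (D² F^±_{m,n})(t,x) = ±2iE(m + ½) F^±_{m,n}(t,x) and (D̃² F^±_{m,n})(t,x) = ±2iE(n + ½) F^±_{m,n}(t,x) for all (t,x) ∈ ℝ². -/

import Mathlib

open MeasureTheory Filter Complex

noncomputable def dT (f : ℝ → ℝ → ℂ) (t x : ℝ) : ℂ := deriv (fun s => f s x) t

noncomputable def dX (f : ℝ → ℝ → ℂ) (t x : ℝ) : ℂ := deriv (fun s => f t s) x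

/-- `D²f = ½[−(∂_t²f − ∂_x²f) − 2iE(x ∂_t f + t ∂_x f) − E²(t² − x²)f]`. -/
noncomputable def D2 (E : ℝ) (f : ℝ → ℝ → ℂ) (t x : ℝ) : ℂ :=
  (1 / 2 : ℂ) *
    (-(dT (dT f) t x - dX (dX f) t x)
      - 2 * Complex.I * (E : ℂ) * ((x : ℂ) * dT f t x + (t : ℂ) * dX f t x)
      - (E : ℂ) ^ 2 * ((t : ℂ) ^ 2 - (x : ℂ) ^ 2) * f t x)

/-- `D̃²f = ½[−(∂_t²f − ∂_x²f) + 2iE(x ∂_t f + t ∂_x f) − E²(t² − x²)f]`. -/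
noncomputable def Dt2 (E : ℝ) (f : ℝ → ℝ → ℂ) (t x : ℝ) : ℂ :=
  (1 / 2 : ℂ) *
    (-(dT (dT f) t x - dX (dX f) t x)
      + 2 * Complex.I * (E : ℂ) * ((x : ℂ) * dT f t x + (t : ℂ) * dX f t x)
      - (E : ℂ) ^ 2 * ((t : ℂ) ^ 2 - (x : ℂ) ^ 2) * f t x)

/-- The explicit expression `F^±_{m,n}` for `m ≥ n` (sign `s = ±1`). -/
noncomputable def Fge (E s : ℝ) (m n : ℕ) (t x : ℝ) : ℂ :=
  ((E / (2 * Real.pi) : ℝ) : ℂ) * ((Real.sqrt (m.factorial * n.factorial) : ℝ) : ℂ) *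
    Complex.exp (-(s : ℂ) * Complex.I * (E : ℂ) * ((t : ℂ) ^ 2 - (x : ℂ) ^ 2) / 2) *
    (Complex.exp ((s : ℂ) * Complex.I * (Real.pi : ℂ) / 4) * ((Real.sqrt E : ℝ) : ℂ)) ^ (m - n) *
    ((t : ℂ) - (s : ℂ) * (x : ℂ)) ^ (m - n) *
    ∑ p ∈ Finset.range (n + 1),
      ((s : ℂ) * Complex.I * (E : ℂ) * ((t : ℂ) ^ 2 - (x : ℂ) ^ 2)) ^ (n - p) * (-1 : ℂ) ^ p /
        (((m - p).factorial : ℂ) * ((n - p).factorial : ℂ) * (p.factorial : ℂ))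

/-- `F^±_{m,n}` for all `m, n`, with `F^±_{m,n} := conj(F^∓_{n,m})` when `m < n`. -/
noncomputable def Fmn (E s : ℝ) (m n : ℕ) (t x : ℝ) : ℂ :=
  if n ≤ m then Fge E s m n t x else (starRingEnd ℂ) (Fge E (-s) n m t x)

noncomputable def cc (a : ℂ) (k n j : ℕ) : ℂ :=
  (-1) ^ (n - j) * a ^ j /
    (((k + j).factorial : ℂ) * (j.factorial : ℂ) * ((n - j).factorial : ℂ))

noncomputable def SS (a : ℂ) (k n : ℕ) (u : ℂ) : ℂ :=
  ∑ j ∈ Finset.range (n + 1), cc a k n j * u ^ j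

noncomputable def SS1 (a : ℂ) (k n : ℕ) (u : ℂ) : ℂ :=
  ∑ j ∈ Finset.range (n + 1), cc a k n j * ((j : ℂ) * u ^ (j - 1))

noncomputable def SS2 (a : ℂ) (k n : ℕ) (u : ℂ) : ℂ :=
  ∑ j ∈ Finset.range (n + 1), cc a k n j * ((j : ℂ) * (((j - 1 : ℕ) : ℂ) * u ^ (j - 1 - 1)))

lemma hasDerivAt_SS (a : ℂ) (k n : ℕ) (u : ℂ) :
    HasDerivAt (SS a k n) (SS1 a k n u) u := by
  apply HasDerivAt.fun_sum
  intro j _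
  simpa using (hasDerivAt_pow j u).const_mul (cc a k n j)

lemma hasDerivAt_SS1 (a : ℂ) (k n : ℕ) (u : ℂ) :
    HasDerivAt (SS1 a k n) (SS2 a k n u) u := by
  apply HasDerivAt.fun_sum
  intro j _
  have := ((hasDerivAt_pow (j - 1) u).const_mul (j : ℂ)).const_mul (cc a k n j)
  convert this using 1

lemma laguerre (a : ℂ) (k n : ℕ) (u : ℂ) :
    u * SS2 a k n u + ((k : ℂ) + 1 - a * u) * SS1 a k n u + a * (n : ℂ) * SS a k n u = 0 := by
  unfold SS SS1 SS2
  rw [Finset.mul_sum, Finset.mul_sum, Finset.mul_sum, ← Finset.sum_add_distrib,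
    ← Finset.sum_add_distrib]
  have key : ∀ j ∈ Finset.range (n + 1),
      u * (cc a k n j * ((j : ℂ) * (((j - 1 : ℕ) : ℂ) * u ^ (j - 1 - 1))))
        + ((k : ℂ) + 1 - a * u) * (cc a k n j * ((j : ℂ) * u ^ (j - 1)))
        + a * (n : ℂ) * (cc a k n j * u ^ j)
      = cc a k n j * (j : ℂ) * ((j : ℂ) + (k : ℂ)) * u ^ (j - 1)
        + a * cc a k n j * ((n : ℂ) - (j : ℂ)) * u ^ j := by
    intro j _
    match j with
    | 0 => simp; ring
    | 1 => simp [cc]; ring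
    | (i + 2) =>
      rw [show i + 2 - 1 = i + 1 from rfl, show i + 1 - 1 = i from rfl,
        pow_succ _ (i+1), pow_succ _ i]
      push_cast
      ring
  rw [Finset.sum_congr rfl key, Finset.sum_add_distrib, Finset.sum_range_succ',
    Finset.sum_range_succ]
  simp only [Nat.cast_zero, zero_mul, mul_zero, add_zero, Nat.cast_succ, sub_self]
  rw [← Finset.sum_add_distrib]
  apply Finset.sum_eq_zero
  intro i hi
  simp only [Finset.mem_range] at hi
  obtain ⟨d, rfl⟩ : ∃ d, n = i + 1 + d := ⟨n - (i + 1), by omega⟩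
  unfold cc
  rw [show i + 1 + d - (i + 1) = d from by omega, show i + 1 + d - i = d + 1 from by omega,
    show k + (i + 1) = (k + i) + 1 from by omega, show i + 1 - 1 = i from rfl]
  rw [Nat.factorial_succ (k + i), Nat.factorial_succ i, Nat.factorial_succ d,
    pow_succ (-1 : ℂ) d]
  have h1 : ((k + i).factorial : ℂ) ≠ 0 := Nat.cast_ne_zero.mpr (Nat.factorial_ne_zero _)
  have h2 : ((i.factorial : ℕ) : ℂ) ≠ 0 := Nat.cast_ne_zero.mpr (Nat.factorial_ne_zero _)
  have h3 : ((d.factorial : ℕ) : ℂ) ≠ 0 := Nat.cast_ne_zero.mpr (Nat.factorial_ne_zero _)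
  have h4 : ((i : ℂ) + 1) ≠ 0 := Nat.cast_add_one_ne_zero i
  have h5 : ((d : ℂ) + 1) ≠ 0 := Nat.cast_add_one_ne_zero d
  have h6 : ((k : ℂ) + (i : ℂ) + 1) ≠ 0 := by
    have := Nat.cast_add_one_ne_zero (R := ℂ) (k + i); push_cast at this; exact this
  push_cast
  field_simp
  ring

noncomputable def AA (a : ℂ) (k n : ℕ) (u : ℂ) : ℂ := Complex.exp (-(a*u)/2) * SS a k n u

noncomputable def AA1 (a : ℂ) (k n : ℕ) (u : ℂ) : ℂ :=
  (-(a/2)) * Complex.exp (-(a*u)/2) * SS a k n u + Complex.exp (-(a*u)/2) * SS1 a k n u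

noncomputable def AA2 (a : ℂ) (k n : ℕ) (u : ℂ) : ℂ :=
  ((-(a/2)) * ((-(a/2)) * Complex.exp (-(a*u)/2)) * SS a k n u
      + (-(a/2)) * Complex.exp (-(a*u)/2) * SS1 a k n u)
    + ((-(a/2)) * Complex.exp (-(a*u)/2) * SS1 a k n u + Complex.exp (-(a*u)/2) * SS2 a k n u)

lemma hasDerivAt_cexp_lin (a u : ℂ) :
    HasDerivAt (fun u : ℂ => Complex.exp (-(a*u)/2)) ((-(a/2)) * Complex.exp (-(a*u)/2)) u := by
  have h : HasDerivAt (fun u : ℂ => -(a*u)/2) (-(a/2)) u := by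
    simpa [neg_div] using ((hasDerivAt_id u).const_mul a).neg.div_const 2
  simpa [mul_comm] using h.cexp

lemma hasDerivAt_AA (a : ℂ) (k n : ℕ) (u : ℂ) :
    HasDerivAt (AA a k n) (AA1 a k n u) u :=
  (hasDerivAt_cexp_lin a u).mul (hasDerivAt_SS a k n u)

lemma hasDerivAt_AA1 (a : ℂ) (k n : ℕ) (u : ℂ) :
    HasDerivAt (AA1 a k n) (AA2 a k n u) u := by
  exact (((hasDerivAt_cexp_lin a u).const_mul (-(a/2))).mul (hasDerivAt_SS a k n u)).add
    ((hasDerivAt_cexp_lin a u).mul (hasDerivAt_SS1 a k n u))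

noncomputable def PH (Cst σ a : ℂ) (k n : ℕ) (z w : ℂ) : ℂ :=
  Cst * (AA a k n (z^2 - w^2) * (z - σ*w)^k)

noncomputable def PHz (Cst σ a : ℂ) (k n : ℕ) (z w : ℂ) : ℂ :=
  Cst * (AA1 a k n (z^2 - w^2) * (2*z) * (z - σ*w)^k
    + AA a k n (z^2 - w^2) * ((k:ℂ) * (z - σ*w)^(k-1)))

noncomputable def PHzz (Cst σ a : ℂ) (k n : ℕ) (z w : ℂ) : ℂ :=
  Cst * (((AA2 a k n (z^2 - w^2) * (2*z)) * (2*z) + AA1 a k n (z^2 - w^2) * 2) * (z - σ*w)^k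
      + AA1 a k n (z^2 - w^2) * (2*z) * ((k:ℂ) * (z - σ*w)^(k-1))
    + (AA1 a k n (z^2 - w^2) * (2*z) * ((k:ℂ) * (z - σ*w)^(k-1))
      + AA a k n (z^2 - w^2) * ((k:ℂ) * (((k-1:ℕ):ℂ) * (z - σ*w)^(k-1-1)))))

noncomputable def PHw (Cst σ a : ℂ) (k n : ℕ) (z w : ℂ) : ℂ :=
  Cst * (AA1 a k n (z^2 - w^2) * (-(2*w)) * (z - σ*w)^k
    + AA a k n (z^2 - w^2) * ((k:ℂ) * (z - σ*w)^(k-1) * (-σ)))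

noncomputable def PHww (Cst σ a : ℂ) (k n : ℕ) (z w : ℂ) : ℂ :=
  Cst * (((AA2 a k n (z^2 - w^2) * (-(2*w))) * (-(2*w)) + AA1 a k n (z^2 - w^2) * (-2)) * (z - σ*w)^k
      + AA1 a k n (z^2 - w^2) * (-(2*w)) * ((k:ℂ) * (z - σ*w)^(k-1) * (-σ))
    + (AA1 a k n (z^2 - w^2) * (-(2*w)) * ((k:ℂ) * (z - σ*w)^(k-1) * (-σ))
      + AA a k n (z^2 - w^2) * ((k:ℂ) * (((k-1:ℕ):ℂ) * (z - σ*w)^(k-1-1) * (-σ)) * (-σ))))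

section derivs
variable (Cst σ a : ℂ) (k n : ℕ) (z w : ℂ)

lemma hasDerivAt_u_z : HasDerivAt (fun z : ℂ => z^2 - w^2) (2*z) z := by
  simpa using (hasDerivAt_pow 2 z).sub_const (w^2)

lemma hasDerivAt_u_w : HasDerivAt (fun w : ℂ => z^2 - w^2) (-(2*w)) w := by
  simpa using (hasDerivAt_pow 2 w).const_sub (z^2)

lemma hasDerivAt_v_z : HasDerivAt (fun z : ℂ => z - σ*w) 1 z := (hasDerivAt_id z).sub_const _

lemma hasDerivAt_v_w : HasDerivAt (fun w : ℂ => z - σ*w) (-σ) w := by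
  simpa using ((hasDerivAt_id w).const_mul σ).const_sub z

lemma hasDerivAt_PH_z :
    HasDerivAt (fun z => PH Cst σ a k n z w) (PHz Cst σ a k n z w) z := by
  refine HasDerivAt.const_mul Cst (HasDerivAt.mul ?_ ?_)
  · simpa [Function.comp_def] using ((hasDerivAt_AA a k n (z^2-w^2)).comp z (hasDerivAt_u_z z w))
  · simpa [Function.comp_def] using ((hasDerivAt_pow k (z - σ*w)).comp z (hasDerivAt_v_z σ z w))

lemma hasDerivAt_PH_w :
    HasDerivAt (fun w => PH Cst σ a k n z w) (PHw Cst σ a k n z w) w := by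
  refine HasDerivAt.const_mul Cst (HasDerivAt.mul ?_ ?_)
  · exact ((hasDerivAt_AA a k n (z^2-w^2)).comp w (hasDerivAt_u_w z w))
  · exact ((hasDerivAt_pow k (z - σ*w)).comp w (hasDerivAt_v_w σ z w))

lemma hasDerivAt_PHz_z :
    HasDerivAt (fun z => PHz Cst σ a k n z w) (PHzz Cst σ a k n z w) z := by
  refine HasDerivAt.const_mul Cst (HasDerivAt.add (HasDerivAt.mul ?_ ?_) (HasDerivAt.mul ?_ ?_))
  · exact HasDerivAt.mul (by exact (hasDerivAt_AA1 a k n (z^2-w^2)).comp z (hasDerivAt_u_z z w))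
      (by simpa using (hasDerivAt_id z).const_mul 2)
  · simpa [Function.comp_def] using ((hasDerivAt_pow k (z - σ*w)).comp z (hasDerivAt_v_z σ z w))
  · exact ((hasDerivAt_AA a k n (z^2-w^2)).comp z (hasDerivAt_u_z z w))
  · simpa using (((hasDerivAt_pow (k-1) (z - σ*w)).comp z (hasDerivAt_v_z σ z w)).const_mul (k:ℂ))

lemma hasDerivAt_PHw_w :
    HasDerivAt (fun w => PHw Cst σ a k n z w) (PHww Cst σ a k n z w) w := by
  refine HasDerivAt.const_mul Cst (HasDerivAt.add (HasDerivAt.mul ?_ ?_) (HasDerivAt.mul ?_ ?_))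
  · exact HasDerivAt.mul (by exact (hasDerivAt_AA1 a k n (z^2-w^2)).comp w (hasDerivAt_u_w z w))
      (by simpa [Pi.neg_def] using ((hasDerivAt_id w).const_mul 2).neg)
  · exact ((hasDerivAt_pow k (z - σ*w)).comp w (hasDerivAt_v_w σ z w))
  · exact ((hasDerivAt_AA a k n (z^2-w^2)).comp w (hasDerivAt_u_w z w))
  · exact ((((hasDerivAt_pow (k-1) (z - σ*w)).comp w (hasDerivAt_v_w σ z w))).const_mul (k:ℂ)).mul_const (-σ)

end derivs

lemma pow_aux (k : ℕ) (v : ℂ) : (k:ℂ) * v^(k-1) * v = (k:ℂ) * v^k := by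
  cases k with
  | zero => simp
  | succ i => rw [Nat.succ_sub_one, pow_succ]; ring


lemma D2_PH (E : ℝ) (Cst σ a : ℂ) (k n : ℕ)
    (hσ : σ^2 = 1) (ha : a = σ * Complex.I * (E:ℂ))
    (f : ℝ → ℝ → ℂ) (hf : ∀ t x : ℝ, f t x = PH Cst σ a k n ↑t ↑x) (t x : ℝ) :
    D2 E f t x = a * (2*((n:ℂ)+(k:ℂ)) + 1) * f t x
      ∧ Dt2 E f t x = a * (2*(n:ℂ) + 1) * f t x := by
  have hdT : ∀ r y : ℝ, dT f r y = PHz Cst σ a k n ↑r ↑y := by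
    intro r y
    unfold dT
    rw [show (fun q : ℝ => f q y) = (fun q : ℝ => PH Cst σ a k n ↑q ↑y) from funext fun q => hf q y]
    exact ((hasDerivAt_PH_z Cst σ a k n ↑r ↑y).comp_ofReal).deriv
  have hdX : ∀ r y : ℝ, dX f r y = PHw Cst σ a k n ↑r ↑y := by
    intro r y
    unfold dX
    rw [show (fun q : ℝ => f r q) = (fun q : ℝ => PH Cst σ a k n ↑r ↑q) from funext fun q => hf r q]
    exact ((hasDerivAt_PH_w Cst σ a k n ↑r ↑y).comp_ofReal).deriv
  have hdTT : dT (dT f) t x = PHzz Cst σ a k n ↑t ↑x := by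
    show deriv (fun q : ℝ => dT f q x) t = _
    rw [show (fun q : ℝ => dT f q x) = (fun q : ℝ => PHz Cst σ a k n ↑q ↑x) from funext fun q => hdT q x]
    exact ((hasDerivAt_PHz_z Cst σ a k n ↑t ↑x).comp_ofReal).deriv
  have hdXX : dX (dX f) t x = PHww Cst σ a k n ↑t ↑x := by
    show deriv (fun q : ℝ => dX f t q) x = _
    rw [show (fun q : ℝ => dX f t q) = (fun q : ℝ => PHw Cst σ a k n ↑t ↑q) from funext fun q => hdX t q]
    exact ((hasDerivAt_PHw_w Cst σ a k n ↑t ↑x).comp_ofReal).deriv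
  have hlag := laguerre a k n (((t:ℂ))^2 - ((x:ℂ))^2)
  have hvk := pow_aux k ((t:ℂ) - σ*(x:ℂ))
  have ha2 : a^2 = -(E:ℂ)^2 := by
    rw [ha, show (σ * Complex.I * (E:ℂ))^2 = σ^2 * Complex.I^2 * (E:ℂ)^2 from by ring,
      hσ, Complex.I_sq]; ring
  have hIE : Complex.I * (E:ℂ) = a * σ := by
    rw [ha]; linear_combination (-(E:ℂ) * Complex.I) * hσ
  unfold D2 Dt2
  rw [hdTT, hdXX, hdT t x, hdX t x, hf t x]
  constructor
  · unfold PH PHz PHzz PHw PHww AA AA1 AA2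
    linear_combination (-2*Cst*Complex.exp (-(a * ((t:ℂ)^2 - (x:ℂ)^2)) / 2)*((t:ℂ) - σ*(x:ℂ))^k) * hlag
      + (Cst*σ*(k:ℂ)*(t:ℂ)*Complex.exp (-(a * ((t:ℂ)^2 - (x:ℂ)^2)) / 2)*SS a k n ((t:ℂ)^2 - (x:ℂ)^2)*((t:ℂ) - σ*(x:ℂ))^(k-1) - Cst*(k:ℂ)*(x:ℂ)*Complex.exp (-(a * ((t:ℂ)^2 - (x:ℂ)^2)) / 2)*SS a k n ((t:ℂ)^2 - (x:ℂ)^2)*((t:ℂ) - σ*(x:ℂ))^(k-1)) * hIE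
      + (2*Cst*a*Complex.exp (-(a * ((t:ℂ)^2 - (x:ℂ)^2)) / 2)*SS a k n ((t:ℂ)^2 - (x:ℂ)^2) - 2*Cst*Complex.exp (-(a * ((t:ℂ)^2 - (x:ℂ)^2)) / 2)*SS1 a k n ((t:ℂ)^2 - (x:ℂ)^2)) * hvk
      + ((1/2)*Cst*(k:ℂ)*((k-1:ℕ):ℂ)*Complex.exp (-(a * ((t:ℂ)^2 - (x:ℂ)^2)) / 2)*SS a k n ((t:ℂ)^2 - (x:ℂ)^2)*((t:ℂ) - σ*(x:ℂ))^(k-1-1) + Cst*a*(k:ℂ)*(t:ℂ)*Complex.exp (-(a * ((t:ℂ)^2 - (x:ℂ)^2)) / 2)*SS a k n ((t:ℂ)^2 - (x:ℂ)^2)*((t:ℂ) - σ*(x:ℂ))^(k-1)) * hσ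
      + ((1/2)*Cst*(x:ℂ)^2*Complex.exp (-(a * ((t:ℂ)^2 - (x:ℂ)^2)) / 2)*SS a k n ((t:ℂ)^2 - (x:ℂ)^2)*((t:ℂ) - σ*(x:ℂ))^k - (1/2)*Cst*(t:ℂ)^2*Complex.exp (-(a * ((t:ℂ)^2 - (x:ℂ)^2)) / 2)*SS a k n ((t:ℂ)^2 - (x:ℂ)^2)*((t:ℂ) - σ*(x:ℂ))^k) * ha2
  · unfold PH PHz PHzz PHw PHww AA AA1 AA2
    linear_combination (-2*Cst*Complex.exp (-(a * ((t:ℂ)^2 - (x:ℂ)^2)) / 2)*((t:ℂ) - σ*(x:ℂ))^k) * hlag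
      + (Cst*(k:ℂ)*(x:ℂ)*Complex.exp (-(a * ((t:ℂ)^2 - (x:ℂ)^2)) / 2)*SS a k n ((t:ℂ)^2 - (x:ℂ)^2)*((t:ℂ) - σ*(x:ℂ))^(k-1) - Cst*σ*(k:ℂ)*(t:ℂ)*Complex.exp (-(a * ((t:ℂ)^2 - (x:ℂ)^2)) / 2)*SS a k n ((t:ℂ)^2 - (x:ℂ)^2)*((t:ℂ) - σ*(x:ℂ))^(k-1)) * hIE
      + (-2*Cst*Complex.exp (-(a * ((t:ℂ)^2 - (x:ℂ)^2)) / 2)*SS1 a k n ((t:ℂ)^2 - (x:ℂ)^2)) * hvk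
      + ((1/2)*Cst*(k:ℂ)*((k-1:ℕ):ℂ)*Complex.exp (-(a * ((t:ℂ)^2 - (x:ℂ)^2)) / 2)*SS a k n ((t:ℂ)^2 - (x:ℂ)^2)*((t:ℂ) - σ*(x:ℂ))^(k-1-1) - Cst*a*(k:ℂ)*(t:ℂ)*Complex.exp (-(a * ((t:ℂ)^2 - (x:ℂ)^2)) / 2)*SS a k n ((t:ℂ)^2 - (x:ℂ)^2)*((t:ℂ) - σ*(x:ℂ))^(k-1)) * hσ
      + ((1/2)*Cst*(x:ℂ)^2*Complex.exp (-(a * ((t:ℂ)^2 - (x:ℂ)^2)) / 2)*SS a k n ((t:ℂ)^2 - (x:ℂ)^2)*((t:ℂ) - σ*(x:ℂ))^k - (1/2)*Cst*(t:ℂ)^2*Complex.exp (-(a * ((t:ℂ)^2 - (x:ℂ)^2)) / 2)*SS a k n ((t:ℂ)^2 - (x:ℂ)^2)*((t:ℂ) - σ*(x:ℂ))^k) * ha2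


lemma Fge_eq_PH (E s : ℝ) (n k : ℕ) (t x : ℝ) :
    Fge E s (n + k) n t x =
      PH (((E / (2 * Real.pi) : ℝ) : ℂ) * ((Real.sqrt ((n + k).factorial * n.factorial) : ℝ) : ℂ)
            * (Complex.exp ((s : ℂ) * Complex.I * (Real.pi : ℂ) / 4) * ((Real.sqrt E : ℝ) : ℂ)) ^ k)
        (s : ℂ) ((s : ℂ) * Complex.I * (E : ℂ)) k n ↑t ↑x := by
  have hsum : (∑ p ∈ Finset.range (n + 1),
      ((s : ℂ) * Complex.I * (E : ℂ) * ((t : ℂ) ^ 2 - (x : ℂ) ^ 2)) ^ (n - p) * (-1 : ℂ) ^ p /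
        (((n + k - p).factorial : ℂ) * ((n - p).factorial : ℂ) * (p.factorial : ℂ)))
      = SS ((s : ℂ) * Complex.I * (E : ℂ)) k n ((t : ℂ) ^ 2 - (x : ℂ) ^ 2) := by
    unfold SS
    conv_rhs => rw [← Finset.sum_range_reflect]
    apply Finset.sum_congr rfl
    intro j hj
    simp only [Finset.mem_range] at hj
    rw [show n + 1 - 1 - j = n - j from by omega]
    unfold cc
    rw [show n - (n - j) = j from by omega, show k + (n - j) = n + k - j from by omega,
      mul_pow]
    ring
  unfold Fge PH AA
  rw [show n + k - n = k from by omega, hsum,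
    show -(s:ℂ) * Complex.I * (E:ℂ) * ((t:ℂ)^2 - (x:ℂ)^2) / 2
      = -(((s:ℂ) * Complex.I * (E:ℂ)) * ((t:ℂ)^2 - (x:ℂ)^2)) / 2 from by ring]
  ring

lemma deriv_conj (f : ℝ → ℂ) (t : ℝ) :
    deriv (fun r => (starRingEnd ℂ) (f r)) t = (starRingEnd ℂ) (deriv f t) := by
  by_cases h : DifferentiableAt ℝ f t
  · exact h.hasDerivAt.star.deriv
  · rw [deriv_zero_of_not_differentiableAt h, deriv_zero_of_not_differentiableAt, map_zero]
    intro hd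
    exact h (by simpa using hd.star)

lemma dT_conj (f : ℝ → ℝ → ℂ) (t x : ℝ) :
    dT (fun a b => (starRingEnd ℂ) (f a b)) t x = (starRingEnd ℂ) (dT f t x) :=
  deriv_conj (fun r => f r x) t

lemma dX_conj (f : ℝ → ℝ → ℂ) (t x : ℝ) :
    dX (fun a b => (starRingEnd ℂ) (f a b)) t x = (starRingEnd ℂ) (dX f t x) :=
  deriv_conj (fun r => f t r) x

lemma dTT_conj (f : ℝ → ℝ → ℂ) (t x : ℝ) :
    dT (dT (fun a b => (starRingEnd ℂ) (f a b))) t x = (starRingEnd ℂ) (dT (dT f) t x) := by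
  show deriv (fun q : ℝ => dT (fun a b => (starRingEnd ℂ) (f a b)) q x) t = _
  rw [show (fun q : ℝ => dT (fun a b => (starRingEnd ℂ) (f a b)) q x)
      = (fun q : ℝ => (starRingEnd ℂ) (dT f q x)) from funext fun q => dT_conj f q x]
  exact deriv_conj (fun q => dT f q x) t

lemma dXX_conj (f : ℝ → ℝ → ℂ) (t x : ℝ) :
    dX (dX (fun a b => (starRingEnd ℂ) (f a b))) t x = (starRingEnd ℂ) (dX (dX f) t x) := by
  show deriv (fun q : ℝ => dX (fun a b => (starRingEnd ℂ) (f a b)) t q) x = _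
  rw [show (fun q : ℝ => dX (fun a b => (starRingEnd ℂ) (f a b)) t q)
      = (fun q : ℝ => (starRingEnd ℂ) (dX f t q)) from funext fun q => dX_conj f t q]
  exact deriv_conj (fun q => dX f t q) x

lemma D2_conj (E : ℝ) (f : ℝ → ℝ → ℂ) (t x : ℝ) :
    D2 E (fun a b => (starRingEnd ℂ) (f a b)) t x = (starRingEnd ℂ) (Dt2 E f t x) := by
  unfold D2 Dt2
  rw [dTT_conj, dXX_conj, dT_conj, dX_conj]
  simp only [map_mul, map_add, map_sub, map_neg, map_div₀, map_one, map_pow, map_ofNat,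
    Complex.conj_I, Complex.conj_ofReal]
  ring

lemma Dt2_conj (E : ℝ) (f : ℝ → ℝ → ℂ) (t x : ℝ) :
    Dt2 E (fun a b => (starRingEnd ℂ) (f a b)) t x = (starRingEnd ℂ) (D2 E f t x) := by
  unfold D2 Dt2
  rw [dTT_conj, dXX_conj, dT_conj, dX_conj]
  simp only [map_mul, map_add, map_sub, map_neg, map_div₀, map_one, map_pow, map_ofNat,
    Complex.conj_I, Complex.conj_ofReal]
  ring

/-- the `F^±_{m,n}` are simultaneous generalized eigenfunctions
of `D²` and `D̃²`: `D²F^±_{m,n} = ±2iE(m+½)F^±_{m,n}` and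
`D̃²F^±_{m,n} = ±2iE(n+½)F^±_{m,n}`. -/
theorem Fmn_eigenfunctions (E : ℝ) (hE : 0 < E) (m n : ℕ) (s : ℝ)
    (hs : s = 1 ∨ s = -1) (t x : ℝ) :
    D2 E (Fmn E s m n) t x
        = (s : ℂ) * (2 * Complex.I * (E : ℂ)) * ((m : ℂ) + 1 / 2) * Fmn E s m n t x
      ∧ Dt2 E (Fmn E s m n) t x
          = (s : ℂ) * (2 * Complex.I * (E : ℂ)) * ((n : ℂ) + 1 / 2) * Fmn E s m n t x := by
  rcases le_or_gt n m with hnm | hlt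
  · obtain ⟨k, rfl⟩ : ∃ k, m = n + k := ⟨m - n, by omega⟩
    have hfun : Fmn E s (n + k) n = Fge E s (n + k) n := by
      funext p q; simp [Fmn, hnm]
    have hσ : ((s : ℝ) : ℂ) ^ 2 = 1 := by rcases hs with rfl | rfl <;> norm_num
    have core := D2_PH E
      (((E / (2 * Real.pi) : ℝ) : ℂ) * ((Real.sqrt ((n + k).factorial * n.factorial) : ℝ) : ℂ)
        * (Complex.exp ((s : ℂ) * Complex.I * (Real.pi : ℂ) / 4) * ((Real.sqrt E : ℝ) : ℂ)) ^ k)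
      (s : ℂ) ((s : ℂ) * Complex.I * (E : ℂ)) k n hσ rfl (Fge E s (n + k) n)
      (fun t x => Fge_eq_PH E s n k t x) t x
    rw [hfun]
    constructor
    · rw [core.1]; push_cast; ring
    · rw [core.2]; push_cast; ring
  · have hnm : ¬ n ≤ m := by omega
    obtain ⟨k, rfl⟩ : ∃ k, n = m + k := ⟨n - m, by omega⟩
    have hfun : Fmn E s m (m + k) = fun a b => (starRingEnd ℂ) (Fge E (-s) (m + k) m a b) := by
      funext p q; simp [Fmn, hnm]
    have hσ : ((-s : ℝ) : ℂ) ^ 2 = 1 := by rcases hs with rfl | rfl <;> norm_num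
    have core := D2_PH E
      (((E / (2 * Real.pi) : ℝ) : ℂ) * ((Real.sqrt ((m + k).factorial * m.factorial) : ℝ) : ℂ)
        * (Complex.exp (((-s : ℝ) : ℂ) * Complex.I * (Real.pi : ℂ) / 4) * ((Real.sqrt E : ℝ) : ℂ)) ^ k)
      ((-s : ℝ) : ℂ) (((-s : ℝ) : ℂ) * Complex.I * (E : ℂ)) k m hσ rfl (Fge E (-s) (m + k) m)
      (fun t x => Fge_eq_PH E (-s) m k t x) t x
    rw [hfun]
    constructor
    · rw [D2_conj, core.2]
      simp only [map_mul, map_add, map_one, map_ofNat, map_div₀, Complex.conj_I,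
        Complex.conj_ofReal, map_natCast]
      push_cast
      ring
    · rw [Dt2_conj, core.1]
      simp only [map_mul, map_add, map_one, map_ofNat, map_div₀, Complex.conj_I,
        Complex.conj_ofReal, map_natCast]
      push_cast
      ring
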